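/- Let t > 0 and ρ ∈ ℝ with ρ ≥ e·t. Then for every n ∈ ℕ with n ≤ ρ, one has t^ρ · (4/e²) · (e/(ρ+2))^{ρ+2} ≤ t^n / n!. -/

import Mathlib

open Real

lemma exp_aux (M : ℝ) (hM : 0 < M) : Real.exp (1/(M+1)) * M ≤ M + 1 := by
  have h := Real.add_one_le_exp (-(1/(M+1)))
  rw [Real.exp_neg] at h
  have h1 : 0 < M + 1 := by linarith
  have h2 : M / (M+1) ≤ (Real.exp (1/(M+1)))⁻¹ := by
    calc M/(M+1) = -(1/(M+1)) + 1 := by field_simp; ring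
    _ ≤ _ := h
  have h3 : 0 < Real.exp (1/(M+1)) := Real.exp_pos _
  rw [div_le_iff₀ h1] at h2
  have := mul_le_mul_of_nonneg_left h2 h3.le
  calc Real.exp (1/(M+1)) * M ≤ Real.exp (1/(M+1)) * ((Real.exp (1/(M+1)))⁻¹ * (M+1)) := this
  _ = M + 1 := by field_simp

lemma key (n : ℕ) : 4 * Real.exp 1 ^ n * n.factorial ≤ ((n:ℝ)+2) ^ (n+2) := by
  induction n with
  | zero => norm_num
  | succ n ih =>
    set M : ℝ := (n:ℝ) + 2 with hMdef
    have hM : 0 < M := by positivity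
    have hexp := exp_aux M hM
    have h3 : 0 < Real.exp (1/(M+1)) := Real.exp_pos _
    have hA : Real.exp (M/(M+1)) * M^(n+2) ≤ (M+1)^(n+2) := by
      have : Real.exp (M/(M+1)) = Real.exp (1/(M+1)) ^ (n+2) := by
        rw [← Real.exp_nat_mul]
        congr 1
        push_cast [hMdef]
        field_simp
      rw [this, ← mul_pow]
      exact pow_le_pow_left₀ (by positivity) hexp _
    have hB : Real.exp 1 * M ≤ (M + 1) * Real.exp (M/(M+1)) := by
      have h1 : 0 < M + 1 := by linarith
      have hE : Real.exp (M/(M+1)) = Real.exp 1 / Real.exp (1/(M+1)) := by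
        rw [← Real.exp_sub]
        congr 1
        field_simp; ring
      rw [hE]
      calc Real.exp 1 * M = (Real.exp 1 * (Real.exp (1/(M+1)) * M)) / Real.exp (1/(M+1)) := by
            field_simp
      _ ≤ (Real.exp 1 * (M+1)) / Real.exp (1/(M+1)) := by gcongr
      _ = (M+1) * (Real.exp 1 / Real.exp (1/(M+1))) := by ring
    have hcast : ((n+1 : ℕ) : ℝ) + 2 = M + 1 := by push_cast [hMdef]; ring
    rw [hcast]
    have hfac : ((n+1).factorial : ℝ) = ((n:ℝ)+1) * n.factorial := by
      rw [Nat.factorial_succ]; push_cast; ring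
    calc 4 * Real.exp 1 ^ (n+1) * ((n+1).factorial : ℝ)
        = (Real.exp 1 * ((n:ℝ)+1)) * (4 * Real.exp 1 ^ n * n.factorial) := by
          rw [hfac, pow_succ]; ring
      _ ≤ (Real.exp 1 * ((n:ℝ)+1)) * M^(n+2) := by
          apply mul_le_mul_of_nonneg_left ih (by positivity)
      _ ≤ (Real.exp 1 * M) * M^(n+2) := by
          have : (n:ℝ)+1 ≤ M := by rw [hMdef]; linarith
          apply mul_le_mul_of_nonneg_right _ (by positivity)
          exact mul_le_mul_of_nonneg_left this (Real.exp_pos 1).le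
      _ ≤ ((M+1) * Real.exp (M/(M+1))) * M^(n+2) := by
          apply mul_le_mul_of_nonneg_right hB (by positivity)
      _ = (M+1) * (Real.exp (M/(M+1)) * M^(n+2)) := by ring
      _ ≤ (M+1) * (M+1)^(n+2) := by
          apply mul_le_mul_of_nonneg_left hA (by linarith)
      _ = (M+1)^(n+1+2) := by ring

/-- Corollary 1.4: if `t > 0` and `ρ ≥ e·t`, then for every natural `n ≤ ρ`,
`t^ρ · (4/e²) · (e/(ρ+2))^{ρ+2} ≤ t^n / n!`. -/
theorem rpow_factorial_bound (t ρ : ℝ) (ht : 0 < t) (hρ : Real.exp 1 * t ≤ ρ)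
    (n : ℕ) (hn : (n : ℝ) ≤ ρ) :
    t ^ ρ * (4 / Real.exp 1 ^ 2) * (Real.exp 1 / (ρ + 2)) ^ (ρ + 2) ≤
      t ^ n / (n.factorial : ℝ) := by
  have he : (0:ℝ) < Real.exp 1 := Real.exp_pos 1
  have hρ0 : 0 < ρ := lt_of_lt_of_le (by positivity) hρ
  have hρ2 : (0:ℝ) < ρ + 2 := by linarith
  have hn2 : (0:ℝ) < (n:ℝ) + 2 := by positivity
  have hfac : (0:ℝ) < (n.factorial : ℝ) := by exact_mod_cast n.factorial_pos
  have hte : t ≤ ρ / Real.exp 1 := by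
    rw [le_div_iff₀ he]; linarith [hρ]
  -- rewrite LHS
  have hL : t ^ ρ * (4 / Real.exp 1 ^ 2) * (Real.exp 1 / (ρ + 2)) ^ (ρ + 2)
      = 4 * Real.exp ρ * t ^ ρ / (ρ + 2) ^ (ρ + 2) := by
    rw [Real.div_rpow he.le hρ2.le, Real.exp_one_rpow]
    have h2 : Real.exp (ρ + 2) = Real.exp ρ * Real.exp 1 ^ 2 := by
      rw [Real.exp_add]
      congr 1
      rw [← Real.exp_one_rpow (2:ℝ), ← Real.rpow_natCast (Real.exp 1) 2]
      norm_num
    rw [h2]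
    have : Real.exp 1 ^ 2 ≠ 0 := by positivity
    field_simp
  rw [hL]
  have h1 : t ^ ρ ≤ t ^ (n:ℝ) * (ρ / Real.exp 1) ^ (ρ - n) := by
    have : t ^ ρ = t ^ (n:ℝ) * t ^ (ρ - n) := by
      rw [← Real.rpow_add ht]; ring_nf
    rw [this]
    exact mul_le_mul_of_nonneg_left (Real.rpow_le_rpow ht.le hte (by linarith))
      (by positivity)
  have hrpos : (0:ℝ) < (ρ+2) ^ (ρ+2) := Real.rpow_pos_of_pos hρ2 _
  calc 4 * Real.exp ρ * t ^ ρ / (ρ + 2) ^ (ρ + 2)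
      ≤ 4 * Real.exp ρ * (t ^ (n:ℝ) * (ρ / Real.exp 1) ^ (ρ - n)) / (ρ + 2) ^ (ρ + 2) := by
        gcongr
    _ = 4 * Real.exp (n:ℝ) * t ^ (n:ℝ) * (ρ ^ (ρ - n) / (ρ + 2) ^ (ρ + 2)) := by
        rw [Real.div_rpow hρ0.le he.le, Real.exp_one_rpow]
        have hne : Real.exp (ρ - n) ≠ 0 := (Real.exp_pos _).ne'
        have hx : Real.exp ρ / Real.exp (ρ - n) = Real.exp (n:ℝ) := by
          rw [← Real.exp_sub]; ring_nf
        rw [← hx]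
        field_simp
    _ ≤ 4 * Real.exp (n:ℝ) * t ^ (n:ℝ) * ((ρ+2) ^ (ρ - n) / (ρ + 2) ^ (ρ + 2)) := by
        apply mul_le_mul_of_nonneg_left _ (by positivity)
        apply div_le_div_of_nonneg_right ?_ hrpos.le
        exact Real.rpow_le_rpow hρ0.le (by linarith) (by linarith)
    _ = 4 * Real.exp (n:ℝ) * t ^ (n:ℝ) / (ρ+2) ^ ((n:ℝ) + 2) := by
        rw [← Real.rpow_sub hρ2]
        have h : ρ - n - (ρ + 2) = -((n:ℝ)+2) := by ring
        rw [h, Real.rpow_neg hρ2.le, div_eq_mul_inv]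
    _ ≤ 4 * Real.exp (n:ℝ) * t ^ (n:ℝ) / ((n:ℝ)+2) ^ ((n:ℝ) + 2) := by
        gcongr
    _ ≤ t ^ n / (n.factorial : ℝ) := by
        have hpow : ((n:ℝ)+2) ^ ((n:ℝ) + 2) = ((n:ℝ)+2) ^ (n+2 : ℕ) := by
          rw [← Real.rpow_natCast ((n:ℝ)+2) (n+2)]
          norm_num
        have hexpn : Real.exp (n:ℝ) = Real.exp 1 ^ n := by
          rw [← Real.exp_nat_mul]; norm_num
        rw [hpow, Real.rpow_natCast, hexpn, div_le_div_iff₀ (by positivity) hfac]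
        have hk := key n
        have htn : (0:ℝ) < t ^ n := by positivity
        calc 4 * Real.exp 1 ^ n * t ^ n * n.factorial
            = t ^ n * (4 * Real.exp 1 ^ n * n.factorial) := by ring
          _ ≤ t ^ n * ((n:ℝ)+2) ^ (n+2) := by
              exact mul_le_mul_of_nonneg_left hk htn.le
          _ = t ^ n * ((n:ℝ)+2) ^ (n+2) := rfl
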